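/- arXiv:1403.4438 — 3 statements merged into one kernel-verified Lean document; each statement's English description precedes it below -/
import Mathlib

section
/- Let A be a symmetric densely defined operator on a Hilbert space E with domain D(A), and suppose there is c > 0 such that ⟨Au, u⟩ ≥ c⟨u, u⟩ for all u ∈ D(A). Then A is essentially self-adjoint if and only if its range A(D(A)) is dense in E. -/
open scoped InnerProductSpace

/-- A symmetric densely defined, strictly positive operator `A` on a Hilbert space `E`
is essentially self-adjoint (its closure is self-adjoint) if and only if its range
is dense in `E`. -/
theorem essentially_selfAdjoint_iff_denseRange_of_strictly_positive
    {𝕜 E : Type*} [RCLike 𝕜] [NormedAddCommGroup E] [InnerProductSpace 𝕜 E]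
    [CompleteSpace E] (A : E →ₗ.[𝕜] E) (hdense : Dense (A.domain : Set E))
    (hsym : ∀ u v : A.domain, ⟪A u, (v : E)⟫_𝕜 = ⟪(u : E), A v⟫_𝕜)
    (c : ℝ) (hc : 0 < c)
    (hpos : ∀ u : A.domain, c * RCLike.re ⟪(u : E), (u : E)⟫_𝕜 ≤ RCLike.re ⟪A u, (u : E)⟫_𝕜) :
    IsSelfAdjoint A.closure ↔ Dense (Set.range fun u : A.domain => A u) := by
  classical
  -- Any closed set containing the graph of `A` contains the topological closure of the graph.
  have hsub : ∀ S : Set (E × E), IsClosed S → (∀ u : A.domain, ((u : E), A u) ∈ S) →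
      ∀ x : E × E, x ∈ A.graph.topologicalClosure → x ∈ S := by
    intro S hS hgr x hx
    have hsub' : (A.graph : Set (E × E)) ⊆ S := by
      rintro p hp
      rcases A.mem_graph_iff.mp hp with ⟨u, hu1, hu2⟩
      have hpe : p = ((u : E), A u) := Prod.ext hu1.symm hu2.symm
      rw [hpe]; exact hgr u
    have hx' : x ∈ closure (A.graph : Set (E × E)) := by
      rwa [← Submodule.topologicalClosure_coe] at *
    exact closure_minimal hsub' hS hx'
  -- The closure of the graph of `A` is a graph.
  have hg0 : ∀ (x : E × E) (_hx : x ∈ A.graph.topologicalClosure) (_hx' : x.fst = 0),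
      x.snd = 0 := by
    intro x hx h1
    have key : ∀ v : A.domain, ⟪x.2, (v : E)⟫_𝕜 = ⟪x.1, A v⟫_𝕜 := by
      intro v
      have hS : IsClosed {p : E × E | ⟪p.2, (v : E)⟫_𝕜 = ⟪p.1, A v⟫_𝕜} :=
        isClosed_eq (continuous_snd.inner continuous_const)
          (continuous_fst.inner continuous_const)
      exact hsub _ hS (fun u => hsym u v) x hx
    apply hdense.eq_zero_of_inner_left (𝕜 := 𝕜)
    intro v hv
    exact (key ⟨v, hv⟩).trans (by rw [h1, inner_zero_left])
  have hclosable : A.IsClosable :=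
    ⟨A.graph.topologicalClosure.toLinearPMap,
      (Submodule.toLinearPMap_graph_eq _ hg0).symm⟩
  have hBmem : ∀ u : A.closure.domain,
      ((u : E), A.closure u) ∈ A.graph.topologicalClosure := by
    intro u
    rw [hclosable.graph_closure_eq_closure_graph]
    exact A.closure.mem_graph u
  have hBdom : Dense (A.closure.domain : Set E) := by
    apply hdense.mono
    exact_mod_cast (A.le_closure).1
  -- symmetry of the closure against elements of `A.domain`
  have hsymB1 : ∀ (u : A.closure.domain) (v : A.domain),
      ⟪A.closure u, (v : E)⟫_𝕜 = ⟪(u : E), A v⟫_𝕜 := by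
    intro u v
    have hS : IsClosed {p : E × E | ⟪p.2, (v : E)⟫_𝕜 = ⟪p.1, A v⟫_𝕜} :=
      isClosed_eq (continuous_snd.inner continuous_const)
        (continuous_fst.inner continuous_const)
    exact hsub _ hS (fun w => hsym w v) _ (hBmem u)
  -- full symmetry of the closure
  have hsymB : ∀ u v : A.closure.domain,
      ⟪A.closure u, (v : E)⟫_𝕜 = ⟪(u : E), A.closure v⟫_𝕜 := by
    intro u v
    have hS : IsClosed {p : E × E | ⟪A.closure u, p.1⟫_𝕜 = ⟪(u : E), p.2⟫_𝕜} :=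
      isClosed_eq (continuous_const.inner continuous_fst)
        (continuous_const.inner continuous_snd)
    exact hsub _ hS (fun w => hsymB1 u w) _ (hBmem v)
  -- positivity of the closure
  have hposB : ∀ u : A.closure.domain,
      c * RCLike.re ⟪(u : E), (u : E)⟫_𝕜 ≤ RCLike.re ⟪A.closure u, (u : E)⟫_𝕜 := by
    intro u
    have hS : IsClosed {p : E × E |
        c * RCLike.re ⟪p.1, p.1⟫_𝕜 ≤ RCLike.re ⟪p.2, p.1⟫_𝕜} := by
      apply isClosed_le
      · exact continuous_const.mul
          (RCLike.continuous_re.comp (continuous_fst.inner continuous_fst))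
      · exact RCLike.continuous_re.comp (continuous_snd.inner continuous_fst)
    exact hsub _ hS (fun w => hpos w) _ (hBmem u)
  -- the lower bound `c * ‖u‖ ≤ ‖A u‖`
  have hbound : ∀ u : A.domain, c * ‖(u : E)‖ ≤ ‖A u‖ := by
    intro u
    rcases eq_or_ne (u : E) 0 with h0 | h0
    · rw [h0, norm_zero, mul_zero]; exact norm_nonneg _
    · have h1 := hpos u
      have h2 : RCLike.re ⟪A u, (u : E)⟫_𝕜 ≤ ‖A u‖ * ‖(u : E)‖ :=
        (RCLike.re_le_norm _).trans (norm_inner_le_norm _ _)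
      have h3 : RCLike.re ⟪(u : E), (u : E)⟫_𝕜 = ‖(u : E)‖ * ‖(u : E)‖ :=
        inner_self_eq_norm_mul_norm (𝕜 := 𝕜) _
      have h4 : (0 : ℝ) < ‖(u : E)‖ := norm_pos_iff.mpr h0
      nlinarith
  constructor
  · -- essentially self-adjoint → dense range
    intro hsa
    rw [LinearPMap.isSelfAdjoint_def] at hsa
    have hRange : ((LinearMap.range A.toFun : Submodule 𝕜 E) : Set E) =
        Set.range fun u : A.domain => A u := by
      ext x
      simp [LinearMap.mem_range]
    rw [← hRange, Submodule.dense_iff_topologicalClosure_eq_top,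
      Submodule.topologicalClosure_eq_top_iff, Submodule.eq_bot_iff]
    intro v hv
    rw [Submodule.mem_orthogonal] at hv
    have hv' : ∀ u : A.domain, ⟪v, A u⟫_𝕜 = 0 := by
      intro u
      rw [← inner_conj_symm, hv (A u) (LinearMap.mem_range_self _ u), map_zero]
    have hvB : ∀ u : A.closure.domain, ⟪v, A.closure u⟫_𝕜 = 0 := by
      intro u
      have hS : IsClosed {p : E × E | ⟪v, p.2⟫_𝕜 = 0} :=
        isClosed_eq (continuous_const.inner continuous_snd) continuous_const
      exact hsub _ hS (fun w => hv' w) _ (hBmem u)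
    have hvadj : v ∈ A.closure.adjoint.domain :=
      LinearPMap.mem_adjoint_domain_of_exists v
        ⟨0, fun x => by rw [inner_zero_left, hvB x]⟩
    have hadj0 : A.closure.adjoint ⟨v, hvadj⟩ = 0 :=
      LinearPMap.adjoint_apply_eq hBdom _ fun x => by rw [inner_zero_left, hvB x]
    have hvB' : v ∈ A.closure.domain := by rw [← hsa]; exact hvadj
    have hBv : A.closure ⟨v, hvB'⟩ = 0 := by
      have hle : A.closure.adjoint ≤ A.closure := le_of_eq hsa
      have he := hle.2 (x := ⟨v, hvadj⟩) (y := ⟨v, hvB'⟩) rfl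
      rw [← he, hadj0]
    have h5 := hposB ⟨v, hvB'⟩
    rw [hBv] at h5
    simp only [inner_zero_left, map_zero] at h5
    have h6 : RCLike.re ⟪v, v⟫_𝕜 = ‖v‖ * ‖v‖ := inner_self_eq_norm_mul_norm (𝕜 := 𝕜) _
    have h7 : ‖v‖ * ‖v‖ ≤ 0 := by nlinarith
    have h8 : ‖v‖ = 0 := by nlinarith [mul_self_nonneg ‖v‖, norm_nonneg v]
    exact norm_eq_zero.mp h8
  · -- dense range → essentially self-adjoint
    intro hr
    rw [LinearPMap.isSelfAdjoint_def]
    have hBsym : A.closure.IsFormalAdjoint A.closure := fun u v => hsymB u v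
    have le1 : A.closure ≤ A.closure.adjoint := hBsym.le_adjoint hBdom
    -- surjectivity of the closure
    have hsurj : ∀ y : E, ∃ u : A.closure.domain, A.closure u = y := by
      intro y
      have hy : y ∈ closure (Set.range fun u : A.domain => A u) := hr y
      rcases mem_closure_iff_seq_limit.mp hy with ⟨f, hfmem, hfy⟩
      simp only [Set.mem_range] at hfmem
      choose x hx using hfmem
      have hcf : CauchySeq f := hfy.cauchySeq
      have hcx : CauchySeq fun n => ((x n : E)) := by
        rw [Metric.cauchySeq_iff] at hcf ⊢
        intro ε hε
        rcases hcf (c * ε) (by positivity) with ⟨N, hN⟩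
        refine ⟨N, fun m hm n hn => ?_⟩
        have hbb := hbound (x m - x n)
        rw [A.map_sub] at hbb
        have e1 : ((x m - x n : A.domain) : E) = (x m : E) - (x n : E) := rfl
        rw [e1, hx m, hx n] at hbb
        have hd := hN m hm n hn
        rw [dist_eq_norm] at hd ⊢
        have : c * ‖(x m : E) - (x n : E)‖ < c * ε := lt_of_le_of_lt hbb hd
        exact lt_of_mul_lt_mul_left this hc.le
      rcases cauchySeq_tendsto_of_complete hcx with ⟨u, hu⟩
      have hmem : (u, y) ∈ A.graph.topologicalClosure := by
        rw [← SetLike.mem_coe, Submodule.topologicalClosure_coe]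
        apply mem_closure_iff_seq_limit.mpr
        refine ⟨fun n => ((x n : E), f n), fun n => ?_, hu.prodMk_nhds hfy⟩
        show ((x n : E), f n) ∈ (A.graph : Set (E × E))
        rw [SetLike.mem_coe, ← hx n]
        exact A.mem_graph (x n)
      rw [hclosable.graph_closure_eq_closure_graph] at hmem
      rcases A.closure.mem_graph_iff.mp hmem with ⟨w, _hw1, hw2⟩
      exact ⟨w, hw2⟩
    -- every element of the adjoint domain is in the closure's domain
    have key : ∀ x : A.closure.adjoint.domain, ∃ hx : (x : E) ∈ A.closure.domain,
        A.closure ⟨(x : E), hx⟩ = A.closure.adjoint x := by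
      intro xadj
      rcases hsurj (A.closure.adjoint xadj) with ⟨u, hu⟩
      have hxe : (xadj : E) = (u : E) := by
        have horth : ∀ z : E, ⟪(xadj : E) - (u : E), z⟫_𝕜 = 0 := by
          intro z
          rcases hsurj z with ⟨w, hwz⟩
          rw [inner_sub_left]
          have h1 : ⟪(xadj : E), z⟫_𝕜 = ⟪A.closure.adjoint xadj, (w : E)⟫_𝕜 := by
            rw [← hwz]
            exact ((LinearPMap.adjoint_isFormalAdjoint hBdom) xadj w).symm
          have h2 : ⟪(u : E), z⟫_𝕜 = ⟪A.closure u, (w : E)⟫_𝕜 := by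
            rw [← hwz]
            exact (hsymB u w).symm
          rw [h1, h2, hu, sub_self]
        have h0 := horth ((xadj : E) - (u : E))
        rw [inner_self_eq_zero] at h0
        exact sub_eq_zero.mp h0
      have hxdom : (xadj : E) ∈ A.closure.domain := hxe ▸ u.2
      refine ⟨hxdom, ?_⟩
      have heq : (⟨(xadj : E), hxdom⟩ : A.closure.domain) = u := Subtype.ext hxe
      rw [heq, hu]
    have le2 : A.closure.adjoint ≤ A.closure := by
      refine ⟨fun z hz => (key ⟨z, hz⟩).1, ?_⟩
      intro x y hxy
      rcases key x with ⟨hx, hBx⟩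
      have heq : (⟨(x : E), hx⟩ : A.closure.domain) = y := Subtype.ext hxy
      rw [heq] at hBx
      exact hBx.symm
    exact le_antisymm le2 le1
end

section
/- Let A and B be symmetric densely defined operators on a Hilbert space with the same dense domain D, and suppose there exist q ∈ (0,1) and M ≥ 0 such that ‖(B-A)u‖ ≤ q‖Au‖ + M‖u‖ and ‖(B-A)u‖ ≤ q‖Bu‖ + M‖u‖ for all u ∈ D. Then A is essentially self-adjoint if and only if B is essentially self-adjoint. -/
open scoped InnerProductSpace
open Filter Topology LinearPMap

namespace KRaux
set_option linter.unusedSectionVars false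
set_option linter.unusedVariables false
set_option maxHeartbeats 1000000


lemma cauchySeq_of_le {α β γ : Type*} [PseudoMetricSpace α] [PseudoMetricSpace β]
    [PseudoMetricSpace γ] {f : ℕ → α} {g : ℕ → β} {h : ℕ → γ} {C C' : ℝ}
    (hg : CauchySeq g) (hh : CauchySeq h)
    (hb : ∀ n m, dist (f n) (f m) ≤ C * dist (g n) (g m) + C' * dist (h n) (h m)) :
    CauchySeq f := by
  rw [cauchySeq_iff_tendsto_dist_atTop_0] at hg hh ⊢
  exact squeeze_zero (fun _ => dist_nonneg) (fun p => hb p.1 p.2)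
    (by simpa using (hg.const_mul C).add (hh.const_mul C'))

lemma scalar_ineq {q μ t a1 a2 b1 b2 : ℝ} :
    (q*a1 + μ*t*b1)^2 + (q*a2 + μ*t*b2)^2
      ≤ (q^2 + μ^2) * (a1^2 + a2^2 + t^2*(b1^2 + b2^2)) := by
  nlinarith [sq_nonneg (μ*a1 - q*t*b1), sq_nonneg (μ*a2 - q*t*b2)]

variable {𝕜 E : Type*} [RCLike 𝕜] [NormedAddCommGroup E] [InnerProductSpace 𝕜 E]
  [CompleteSpace E]

/-- The doubled operator `(u,v) ↦ (𝒯u - t v, 𝒯v + t u)` into `WithLp 2 (E × E)`. -/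
noncomputable def pmapPair (𝒯 : E →ₗ.[𝕜] E) (t : ℝ) :
    (↥𝒯.domain × ↥𝒯.domain) →ₗ[𝕜] WithLp 2 (E × E) :=
  (WithLp.linearEquiv 2 𝕜 (E × E)).symm.toLinearMap.comp
    (((𝒯.toFun.comp (LinearMap.fst 𝕜 _ _)) -
        ((t : 𝕜) • (𝒯.domain.subtype.comp (LinearMap.snd 𝕜 _ _)))).prod
      ((𝒯.toFun.comp (LinearMap.snd 𝕜 _ _)) +
        ((t : 𝕜) • (𝒯.domain.subtype.comp (LinearMap.fst 𝕜 _ _)))))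

lemma pmapPair_apply (𝒯 : E →ₗ.[𝕜] E) (t : ℝ) (w : ↥𝒯.domain × ↥𝒯.domain) :
    pmapPair 𝒯 t w = (WithLp.equiv 2 (E × E)).symm
      (𝒯 w.1 - (t : 𝕜) • (w.2 : E), 𝒯 w.2 + (t : 𝕜) • (w.1 : E)) := rfl

lemma pmapPair_fst (𝒯 : E →ₗ.[𝕜] E) (t : ℝ) (w : ↥𝒯.domain × ↥𝒯.domain) :
    (pmapPair 𝒯 t w).fst = 𝒯 w.1 - (t : 𝕜) • (w.2 : E) := rfl

lemma pmapPair_snd (𝒯 : E →ₗ.[𝕜] E) (t : ℝ) (w : ↥𝒯.domain × ↥𝒯.domain) :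
    (pmapPair 𝒯 t w).snd = 𝒯 w.2 + (t : 𝕜) • (w.1 : E) := rfl

lemma pmapPair_norm_sq {𝒯 : E →ₗ.[𝕜] E} (t : ℝ)
    (hsym : ∀ x y : 𝒯.domain, ⟪𝒯 x, (y : E)⟫_𝕜 = ⟪(x : E), 𝒯 y⟫_𝕜)
    (w : ↥𝒯.domain × ↥𝒯.domain) :
    ‖pmapPair 𝒯 t w‖^2
      = ‖𝒯 w.1‖^2 + ‖𝒯 w.2‖^2 + t^2 * (‖(w.1 : E)‖^2 + ‖(w.2 : E)‖^2) := by
  rw [WithLp.prod_norm_sq_eq_of_L2, pmapPair_fst, pmapPair_snd,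
    norm_sub_sq (𝕜 := 𝕜), norm_add_sq (𝕜 := 𝕜)]
  have h1 : RCLike.re ⟪𝒯 w.1, (t : 𝕜) • (w.2 : E)⟫_𝕜 = t * RCLike.re ⟪𝒯 w.1, (w.2 : E)⟫_𝕜 := by
    rw [inner_smul_right]
    exact RCLike.re_ofReal_mul t _
  have h2 : RCLike.re ⟪𝒯 w.2, (t : 𝕜) • (w.1 : E)⟫_𝕜 = t * RCLike.re ⟪𝒯 w.2, (w.1 : E)⟫_𝕜 := by
    rw [inner_smul_right]
    exact RCLike.re_ofReal_mul t _
  have h3 : RCLike.re ⟪𝒯 w.2, (w.1 : E)⟫_𝕜 = RCLike.re ⟪𝒯 w.1, (w.2 : E)⟫_𝕜 := by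
    rw [hsym w.2 w.1, inner_re_symm]
  have h4 : ‖(t : 𝕜) • (w.2 : E)‖^2 = t^2 * ‖(w.2 : E)‖^2 := by
    rw [norm_smul, RCLike.norm_ofReal, mul_pow, sq_abs]
  have h5 : ‖(t : 𝕜) • (w.1 : E)‖^2 = t^2 * ‖(w.1 : E)‖^2 := by
    rw [norm_smul, RCLike.norm_ofReal, mul_pow, sq_abs]
  rw [h1, h2, h3, h4, h5]
  ring

lemma mem_of_isSelfAdjoint {𝒯 : E →ₗ.[𝕜] E} (hself : IsSelfAdjoint 𝒯) {f g' : E}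
    (h : ∀ x : 𝒯.domain, ⟪g', (x : E)⟫_𝕜 = ⟪f, 𝒯 x⟫_𝕜) :
    ∃ hf : f ∈ 𝒯.domain, 𝒯 ⟨f, hf⟩ = g' := by
  have hd : Dense (𝒯.domain : Set E) := hself.dense_domain
  have heq : 𝒯† = 𝒯 := (isSelfAdjoint_def (A := 𝒯)).mp hself
  have hmem : f ∈ 𝒯†.domain := mem_adjoint_domain_of_exists _ ⟨g', h⟩
  have hval : 𝒯† ⟨f, hmem⟩ = g' := adjoint_apply_eq hd _ (fun x => h x)
  have hle : 𝒯† ≤ 𝒯 := le_of_eq heq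
  refine ⟨hle.1 hmem, ?_⟩
  rw [← hval]
  exact (hle.2 (x := ⟨f, hmem⟩) (y := ⟨f, hle.1 hmem⟩) rfl).symm

lemma isSymm_of_isSelfAdjoint {𝒯 : E →ₗ.[𝕜] E} (hself : IsSelfAdjoint 𝒯) :
    ∀ x y : 𝒯.domain, ⟪𝒯 x, (y : E)⟫_𝕜 = ⟪(x : E), 𝒯 y⟫_𝕜 := by
  have hd : Dense (𝒯.domain : Set E) := hself.dense_domain
  have heq : 𝒯† = 𝒯 := (isSelfAdjoint_def (A := 𝒯)).mp hself
  have hfa := adjoint_isFormalAdjoint (T := 𝒯) hd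
  intro x y
  have hle : 𝒯 ≤ 𝒯† := ge_of_eq heq
  have hx : (x : E) ∈ 𝒯†.domain := hle.1 x.2
  have hvx : 𝒯 x = 𝒯† ⟨(x : E), hx⟩ := hle.2 (x := x) (y := ⟨(x : E), hx⟩) rfl
  rw [hvx]
  exact hfa ⟨(x : E), hx⟩ y

theorem isSelfAdjoint_of_surj {𝒮 : E →ₗ.[𝕜] E} (hdense : Dense (𝒮.domain : Set E))
    (hsym : ∀ x y : 𝒮.domain, ⟪𝒮 x, (y : E)⟫_𝕜 = ⟪(x : E), 𝒮 y⟫_𝕜) {t : ℝ} (ht : t ≠ 0)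
    (hsurj : ∀ f g : E, ∃ x y : 𝒮.domain,
      𝒮 x - (t : 𝕜) • (y : E) = f ∧ 𝒮 y + (t : 𝕜) • (x : E) = g) :
    IsSelfAdjoint 𝒮 := by
  rw [isSelfAdjoint_def]
  have hle1 : 𝒮 ≤ 𝒮† := IsFormalAdjoint.le_adjoint hdense hsym
  have key : ∀ f : 𝒮†.domain, ∃ hf : (f : E) ∈ 𝒮.domain, 𝒮 ⟨(f : E), hf⟩ = 𝒮† f := by
    intro f
    have hadj : ∀ x : 𝒮.domain, ⟪𝒮† f, (x : E)⟫_𝕜 = ⟪(f : E), 𝒮 x⟫_𝕜 :=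
      fun x => adjoint_isFormalAdjoint hdense f x
    obtain ⟨u, v, huv1, huv2⟩ := hsurj (𝒮† f) ((t : 𝕜) • (f : E))
    set a : E := (f : E) - (u : E) with ha
    set b : E := -(v : E) with hb
    have hSu : 𝒮 u = 𝒮† f + (t : 𝕜) • (v : E) := sub_eq_iff_eq_add.mp huv1
    have hSv : 𝒮 v = (t : 𝕜) • (f : E) - (t : 𝕜) • (u : E) := by
      rw [← huv2]; abel
    have hconj : (starRingEnd 𝕜) ((t : ℝ) : 𝕜) = ((t : ℝ) : 𝕜) := RCLike.conj_ofReal t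
    have id1 : ∀ x : 𝒮.domain, ⟪a, 𝒮 x⟫_𝕜 = (t : 𝕜) * ⟪b, (x : E)⟫_𝕜 := by
      intro x
      rw [ha, hb, inner_sub_left, ← hadj x, ← hsym u x, hSu, inner_add_left,
        inner_smul_left, hconj, inner_neg_left]
      ring
    have id2 : ∀ x : 𝒮.domain, ⟪b, 𝒮 x⟫_𝕜 = -((t : 𝕜) * ⟪a, (x : E)⟫_𝕜) := by
      intro x
      rw [hb, ha, inner_neg_left, ← hsym v x, hSv, inner_sub_left, inner_smul_left,
        inner_smul_left, hconj, inner_sub_left]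
      ring
    obtain ⟨x', y', hx'1, hx'2⟩ := hsurj b a
    have e1 : ⟪a, (𝒮 y' : E) + (t : 𝕜) • (x' : E)⟫_𝕜
        = (t : 𝕜) * ⟪b, (y' : E)⟫_𝕜 + (t : 𝕜) * ⟪a, (x' : E)⟫_𝕜 := by
      rw [inner_add_right, inner_smul_right, id1 y']
    have e2 : ⟪b, (𝒮 x' : E) - (t : 𝕜) • (y' : E)⟫_𝕜
        = -((t : 𝕜) * ⟪a, (x' : E)⟫_𝕜) - (t : 𝕜) * ⟪b, (y' : E)⟫_𝕜 := by
      rw [inner_sub_right, inner_smul_right, id2 x']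
    rw [hx'2] at e1
    rw [hx'1] at e2
    have hsum : ⟪a, a⟫_𝕜 + ⟪b, b⟫_𝕜 = 0 := by
      rw [e1, e2]; ring
    have hre : ‖a‖ ^ 2 + ‖b‖ ^ 2 = 0 := by
      have := congrArg RCLike.re hsum
      simpa [inner_self_eq_norm_sq] using this
    have hA0 : a = 0 := by
      have : ‖a‖ = 0 := by nlinarith [sq_nonneg ‖a‖, sq_nonneg ‖b‖, norm_nonneg a, norm_nonneg b]
      simpa using this
    have hB0 : b = 0 := by
      have : ‖b‖ = 0 := by nlinarith [sq_nonneg ‖a‖, sq_nonneg ‖b‖, norm_nonneg a, norm_nonneg b]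
      simpa using this
    have hfu : (f : E) = (u : E) := sub_eq_zero.mp hA0
    have hv0 : (v : E) = 0 := neg_eq_zero.mp hB0
    refine ⟨hfu ▸ u.2, ?_⟩
    have : (⟨(f : E), hfu ▸ u.2⟩ : 𝒮.domain) = u := Subtype.ext hfu
    rw [this, hSu, hv0, smul_zero, add_zero]
  have hle2 : 𝒮† ≤ 𝒮 := by
    refine ⟨fun z hz => (key ⟨z, hz⟩).1, ?_⟩
    intro x y hxy
    obtain ⟨hf, hval⟩ := key x
    rw [← hval]
    exact congrArg _ (Subtype.ext hxy)
  exact le_antisymm hle2 hle1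

lemma norm_le_of_sq_le_sq {a b : ℝ} (hb : 0 ≤ b) (h : a^2 ≤ b^2) : a ≤ b :=
  le_of_pow_le_pow_left₀ two_ne_zero hb h

lemma pmapPair_bounds {𝒯 : E →ₗ.[𝕜] E}
    (hsym : ∀ x y : 𝒯.domain, ⟪𝒯 x, (y : E)⟫_𝕜 = ⟪(x : E), 𝒯 y⟫_𝕜) (t : ℝ)
    (w : ↥𝒯.domain × ↥𝒯.domain) :
    ‖𝒯 w.1‖ ≤ ‖pmapPair 𝒯 t w‖ ∧ ‖𝒯 w.2‖ ≤ ‖pmapPair 𝒯 t w‖ ∧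
    |t| * ‖(w.1 : E)‖ ≤ ‖pmapPair 𝒯 t w‖ ∧ |t| * ‖(w.2 : E)‖ ≤ ‖pmapPair 𝒯 t w‖ := by
  have h := pmapPair_norm_sq t hsym w
  have h1 : (|t| * ‖(w.1 : E)‖)^2 = t^2 * ‖(w.1 : E)‖^2 := by rw [mul_pow, sq_abs]
  have h2 : (|t| * ‖(w.2 : E)‖)^2 = t^2 * ‖(w.2 : E)‖^2 := by rw [mul_pow, sq_abs]
  refine ⟨norm_le_of_sq_le_sq (norm_nonneg _) ?_, norm_le_of_sq_le_sq (norm_nonneg _) ?_,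
    norm_le_of_sq_le_sq (norm_nonneg _) ?_, norm_le_of_sq_le_sq (norm_nonneg _) ?_⟩ <;>
    nlinarith [sq_nonneg ‖𝒯 w.1‖, sq_nonneg ‖𝒯 w.2‖, sq_nonneg (t * ‖(w.1 : E)‖),
      sq_nonneg (t * ‖(w.2 : E)‖), sq_abs t, mul_pow t ‖(w.1 : E)‖ 2, mul_pow t ‖(w.2 : E)‖ 2]

lemma pmapPair_surjective {𝒯 : E →ₗ.[𝕜] E} (hclosed : 𝒯.IsClosed) (hself : IsSelfAdjoint 𝒯)
    {t : ℝ} (ht : t ≠ 0) : Function.Surjective (pmapPair (𝕜 := 𝕜) 𝒯 t) := by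
  have hsym := isSymm_of_isSelfAdjoint hself
  set P := pmapPair (𝕜 := 𝕜) 𝒯 t with hP
  set R := LinearMap.range P with hR
  have htpos : (0:ℝ) < |t| := abs_pos.mpr ht
  -- closedness of the range
  have hclosedR : IsClosed (R : Set (WithLp 2 (E × E))) := by
    apply IsSeqClosed.isClosed
    intro hseq h hmem htend
    have hchoice : ∀ n, ∃ w, P w = hseq n := fun n => hmem n
    choose w hw using hchoice
    have hcs : CauchySeq hseq := htend.cauchySeq
    have hkey : ∀ n m, ‖P (w n) - P (w m)‖ = dist (hseq n) (hseq m) := by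
      intro n m; rw [dist_eq_norm, hw n, hw m]
    have hkey2 : ∀ n m, P (w n) - P (w m) = P (w n - w m) := fun n m => (map_sub P _ _).symm
    -- Cauchy sequences of components
    have hcu : CauchySeq (fun n => ((w n).1 : E)) := by
      apply cauchySeq_of_le (C := 1/|t|) (C' := 0) hcs hcs
      intro n m
      have hb := (pmapPair_bounds hsym t ((w n) - (w m))).2.2.1
      rw [← hkey2, hkey] at hb
      have : dist ((w n).1 : E) ((w m).1 : E) = ‖(((w n) - (w m)).1 : E)‖ := by
        rw [dist_eq_norm]; rfl
      rw [this, zero_mul, add_zero, div_mul_eq_mul_div, one_mul, le_div_iff₀ htpos, mul_comm]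
      exact hb
    have hcv : CauchySeq (fun n => ((w n).2 : E)) := by
      apply cauchySeq_of_le (C := 1/|t|) (C' := 0) hcs hcs
      intro n m
      have hb := (pmapPair_bounds hsym t ((w n) - (w m))).2.2.2
      rw [← hkey2, hkey] at hb
      have : dist ((w n).2 : E) ((w m).2 : E) = ‖(((w n) - (w m)).2 : E)‖ := by
        rw [dist_eq_norm]; rfl
      rw [this, zero_mul, add_zero, div_mul_eq_mul_div, one_mul, le_div_iff₀ htpos, mul_comm]
      exact hb
    have hcTu : CauchySeq (fun n => 𝒯 (w n).1) := by
      apply cauchySeq_of_le (C := 1) (C' := 0) hcs hcs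
      intro n m
      have hb := (pmapPair_bounds hsym t ((w n) - (w m))).1
      rw [← hkey2, hkey] at hb
      have : dist (𝒯 (w n).1) (𝒯 (w m).1) = ‖𝒯 (((w n) - (w m)).1)‖ := by
        rw [dist_eq_norm]
        exact congrArg _ (LinearPMap.map_sub 𝒯 (w n).1 (w m).1).symm
      rw [this]
      linarith [hb, dist_nonneg (x := hseq n) (y := hseq m)]
    have hcTv : CauchySeq (fun n => 𝒯 (w n).2) := by
      apply cauchySeq_of_le (C := 1) (C' := 0) hcs hcs
      intro n m
      have hb := (pmapPair_bounds hsym t ((w n) - (w m))).2.1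
      rw [← hkey2, hkey] at hb
      have : dist (𝒯 (w n).2) (𝒯 (w m).2) = ‖𝒯 (((w n) - (w m)).2)‖ := by
        rw [dist_eq_norm]
        exact congrArg _ (LinearPMap.map_sub 𝒯 (w n).2 (w m).2).symm
      rw [this]
      linarith [hb, dist_nonneg (x := hseq n) (y := hseq m)]
    obtain ⟨uL, huL⟩ := cauchySeq_tendsto_of_complete hcu
    obtain ⟨vL, hvL⟩ := cauchySeq_tendsto_of_complete hcv
    obtain ⟨aL, haL⟩ := cauchySeq_tendsto_of_complete hcTu
    obtain ⟨bL, hbL⟩ := cauchySeq_tendsto_of_complete hcTv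
    have hmem1 : (uL, aL) ∈ 𝒯.graph :=
      hclosed.mem_of_tendsto (huL.prodMk_nhds haL)
        (Eventually.of_forall fun n => 𝒯.mem_graph (w n).1)
    have hmem2 : (vL, bL) ∈ 𝒯.graph :=
      hclosed.mem_of_tendsto (hvL.prodMk_nhds hbL)
        (Eventually.of_forall fun n => 𝒯.mem_graph (w n).2)
    obtain ⟨ux, hux1, hux2⟩ := (mem_graph_iff 𝒯).1 hmem1
    obtain ⟨vx, hvx1, hvx2⟩ := (mem_graph_iff 𝒯).1 hmem2
    refine ⟨(ux, vx), ?_⟩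
    -- identify the limit
    have e := WithLp.prodContinuousLinearEquiv 2 𝕜 E E
    have he1 : ∀ n, (WithLp.prodContinuousLinearEquiv 2 𝕜 E E) (hseq n)
        = (𝒯 (w n).1 - (t : 𝕜) • ((w n).2 : E), 𝒯 (w n).2 + (t : 𝕜) • ((w n).1 : E)) := by
      intro n; rw [← hw n]; rfl
    have htend2 : Tendsto (fun n => (WithLp.prodContinuousLinearEquiv 2 𝕜 E E) (hseq n)) atTop
        (𝓝 (aL - (t : 𝕜) • vL, bL + (t : 𝕜) • uL)) := by
      simp only [he1]
      exact ((haL.sub (hvL.const_smul ((t : 𝕜)))).prodMk_nhds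
        (hbL.add (huL.const_smul ((t : 𝕜)))))
    have htend3 : Tendsto (fun n => (WithLp.prodContinuousLinearEquiv 2 𝕜 E E) (hseq n)) atTop
        (𝓝 ((WithLp.prodContinuousLinearEquiv 2 𝕜 E E) h)) :=
      ((WithLp.prodContinuousLinearEquiv 2 𝕜 E E).continuous.tendsto h).comp htend
    have heq : (WithLp.prodContinuousLinearEquiv 2 𝕜 E E) h
        = (aL - (t : 𝕜) • vL, bL + (t : 𝕜) • uL) := tendsto_nhds_unique htend3 htend2
    apply (WithLp.prodContinuousLinearEquiv 2 𝕜 E E).injective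
    rw [heq]
    show (𝒯 ux - (t : 𝕜) • (vx : E), 𝒯 vx + (t : 𝕜) • (ux : E)) = _
    rw [hux1, hux2, hvx1, hvx2]
  -- density of the range
  have hdenseR : R.topologicalClosure = ⊤ := by
    rw [Submodule.topologicalClosure_eq_top_iff]
    rw [Submodule.eq_bot_iff]
    intro z hz
    have hzperp : ∀ p ∈ R, ⟪p, z⟫_𝕜 = 0 := (Submodule.mem_orthogonal R z).1 hz
    have hconj : (starRingEnd 𝕜) ((t : ℝ) : 𝕜) = ((t : ℝ) : 𝕜) := RCLike.conj_ofReal t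
    have hxline : ∀ x : 𝒯.domain, ⟪𝒯 x, z.fst⟫_𝕜 + (t : 𝕜) * ⟪(x : E), z.snd⟫_𝕜 = 0 := by
      intro x
      have h0 := hzperp (P (x, 0)) ⟨(x, 0), rfl⟩
      rw [WithLp.prod_inner_apply] at h0
      change ⟪(P (x, 0)).fst, z.fst⟫_𝕜 + ⟪(P (x, 0)).snd, z.snd⟫_𝕜 = 0 at h0
      rw [pmapPair_fst, pmapPair_snd] at h0
      simp only [LinearPMap.map_zero, ZeroMemClass.coe_zero, smul_zero, sub_zero, zero_add] at h0
      rwa [inner_smul_left, hconj] at h0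
    have hyline : ∀ y : 𝒯.domain, ⟪𝒯 y, z.snd⟫_𝕜 - (t : 𝕜) * ⟪(y : E), z.fst⟫_𝕜 = 0 := by
      intro y
      have h0 := hzperp (P (0, y)) ⟨(0, y), rfl⟩
      rw [WithLp.prod_inner_apply] at h0
      change ⟪(P (0, y)).fst, z.fst⟫_𝕜 + ⟪(P (0, y)).snd, z.snd⟫_𝕜 = 0 at h0
      rw [pmapPair_fst, pmapPair_snd] at h0
      simp only [LinearPMap.map_zero, ZeroMemClass.coe_zero, smul_zero, add_zero, zero_sub] at h0
      rw [inner_neg_left, inner_smul_left, hconj] at h0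
      linear_combination h0
    have hfmem : ∃ hf : z.fst ∈ 𝒯.domain, 𝒯 ⟨z.fst, hf⟩ = -((t : 𝕜) • z.snd) := by
      apply mem_of_isSelfAdjoint hself
      intro x
      have h0 := hxline x
      have : ⟪z.fst, 𝒯 x⟫_𝕜 = -((t : 𝕜) * ⟪z.snd, (x : E)⟫_𝕜) := by
        have := congrArg (starRingEnd 𝕜) (show ⟪𝒯 x, z.fst⟫_𝕜 = -((t : 𝕜) * ⟪(x : E), z.snd⟫_𝕜) by
          linear_combination h0)
        simpa [inner_conj_symm, hconj] using this
      rw [this, inner_neg_left, inner_smul_left, hconj]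
    have hgmem : ∃ hg : z.snd ∈ 𝒯.domain, 𝒯 ⟨z.snd, hg⟩ = (t : 𝕜) • z.fst := by
      apply mem_of_isSelfAdjoint hself
      intro y
      have h0 := hyline y
      have : ⟪z.snd, 𝒯 y⟫_𝕜 = (t : 𝕜) * ⟪z.fst, (y : E)⟫_𝕜 := by
        have := congrArg (starRingEnd 𝕜) (show ⟪𝒯 y, z.snd⟫_𝕜 = (t : 𝕜) * ⟪(y : E), z.fst⟫_𝕜 by
          linear_combination h0)
        simpa [inner_conj_symm, hconj] using this
      rw [this, inner_smul_left, hconj]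
    obtain ⟨hf, hfval⟩ := hfmem
    obtain ⟨hg, hgval⟩ := hgmem
    have hid : -((t : 𝕜) * ⟪z.snd, z.snd⟫_𝕜) = (t : 𝕜) * ⟪z.fst, z.fst⟫_𝕜 := by
      have h1 := hsym ⟨z.fst, hf⟩ ⟨z.snd, hg⟩
      rw [hfval, hgval] at h1
      rw [inner_neg_left, inner_smul_left, inner_smul_right, hconj] at h1
      exact h1
    have hre := congrArg RCLike.re hid
    rw [_root_.map_neg, RCLike.re_ofReal_mul, RCLike.re_ofReal_mul, inner_self_eq_norm_sq,
      inner_self_eq_norm_sq] at hre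
    have hsum0 : ‖z.fst‖^2 + ‖z.snd‖^2 = 0 := by
      have h := mul_eq_zero.mp (show t * (‖z.fst‖^2 + ‖z.snd‖^2) = 0 by linarith)
      exact h.resolve_left ht
    have hf0 : z.fst = 0 := by
      have h2 : ‖z.fst‖^2 = 0 := by nlinarith [sq_nonneg ‖z.fst‖, sq_nonneg ‖z.snd‖]
      simpa using (pow_eq_zero_iff two_ne_zero).mp h2
    have hg0 : z.snd = 0 := by
      have h2 : ‖z.snd‖^2 = 0 := by nlinarith [sq_nonneg ‖z.fst‖, sq_nonneg ‖z.snd‖]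
      simpa using (pow_eq_zero_iff two_ne_zero).mp h2
    apply (WithLp.prodContinuousLinearEquiv 2 𝕜 E E).injective
    show (z.fst, z.snd) = _
    rw [hf0, hg0]
    rfl
  have hRtop : R = ⊤ := by
    rw [← hdenseR, hclosedR.submodule_topologicalClosure_eq]
  exact LinearMap.range_eq_top.mp hRtop

lemma perturbed_surj {𝒯 𝒮 : E →ₗ.[𝕜] E}
    (hsymT : ∀ x y : 𝒯.domain, ⟪𝒯 x, (y : E)⟫_𝕜 = ⟪(x : E), 𝒯 y⟫_𝕜)
    (hdom : 𝒯.domain ≤ 𝒮.domain)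
    {q M t : ℝ} (ht : 0 < t) (hq0 : 0 ≤ q) (hM : 0 ≤ M)
    (hc : Real.sqrt (q^2 + (M/t)^2) < 1)
    (hC : ∀ x : 𝒯.domain, ‖𝒮 ⟨(x : E), hdom x.2⟩ - 𝒯 x‖ ≤ q * ‖𝒯 x‖ + M * ‖(x : E)‖)
    (hsurjT : Function.Surjective (pmapPair (𝕜 := 𝕜) 𝒯 t)) :
    ∀ f g : E, ∃ x y : 𝒮.domain,
      𝒮 x - (t : 𝕜) • (y : E) = f ∧ 𝒮 y + (t : 𝕜) • (x : E) = g := by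
  set c := Real.sqrt (q^2 + (M/t)^2) with hcdef
  have hc0 : 0 ≤ c := Real.sqrt_nonneg _
  have hc2 : c^2 = q^2 + (M/t)^2 := Real.sq_sqrt (by positivity)
  set P := pmapPair (𝕜 := 𝕜) 𝒯 t with hPdef
  have ht2 : (0:ℝ) < t^2 := by positivity
  have hinj : Function.Injective P := by
    intro w w' hww
    have h0 : P (w - w') = 0 := by rw [_root_.map_sub, hww, sub_self]
    have hnz := pmapPair_norm_sq t hsymT (w - w')
    rw [hPdef] at h0
    rw [h0, norm_zero] at hnz
    have hz1 : ‖((w - w').1 : E)‖^2 = 0 := by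
      nlinarith [sq_nonneg ‖𝒯 (w - w').1‖, sq_nonneg ‖𝒯 (w - w').2‖,
        sq_nonneg ‖((w - w').1 : E)‖, sq_nonneg ‖((w - w').2 : E)‖,
        mul_nonneg ht2.le (sq_nonneg ‖((w - w').2 : E)‖),
        mul_nonneg ht2.le (sq_nonneg ‖((w - w').1 : E)‖)]
    have hz2 : ‖((w - w').2 : E)‖^2 = 0 := by
      nlinarith [sq_nonneg ‖𝒯 (w - w').1‖, sq_nonneg ‖𝒯 (w - w').2‖,
        sq_nonneg ‖((w - w').1 : E)‖, sq_nonneg ‖((w - w').2 : E)‖,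
        mul_nonneg ht2.le (sq_nonneg ‖((w - w').2 : E)‖),
        mul_nonneg ht2.le (sq_nonneg ‖((w - w').1 : E)‖)]
    have e1 : ((w - w').1 : E) = 0 := by
      have := (pow_eq_zero_iff two_ne_zero).mp hz1
      simpa using this
    have e2 : ((w - w').2 : E) = 0 := by
      have := (pow_eq_zero_iff two_ne_zero).mp hz2
      simpa using this
    have : w - w' = 0 := by
      apply Prod.ext
      · exact Subtype.ext e1
      · exact Subtype.ext e2
    exact sub_eq_zero.mp this
  -- perturbation map
  set Cmap : ↥𝒯.domain →ₗ[𝕜] E :=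
    (𝒮.toFun.comp (Submodule.inclusion hdom)) - 𝒯.toFun with hCmapdef
  set Clin : (↥𝒯.domain × ↥𝒯.domain) →ₗ[𝕜] WithLp 2 (E × E) :=
    (WithLp.linearEquiv 2 𝕜 (E × E)).symm.toLinearMap.comp
      ((Cmap.comp (LinearMap.fst 𝕜 _ _)).prod (Cmap.comp (LinearMap.snd 𝕜 _ _))) with hClindef
  have hCb : ∀ x : 𝒯.domain, ‖Cmap x‖ ≤ q * ‖𝒯 x‖ + M * ‖(x : E)‖ := fun x => hC x
  have hCbound : ∀ w, ‖Clin w‖ ≤ c * ‖P w‖ := by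
    intro w
    have hn : ‖Clin w‖^2 = ‖Cmap w.1‖^2 + ‖Cmap w.2‖^2 :=
      WithLp.prod_norm_sq_eq_of_L2 (Clin w)
    have e1 : ‖Cmap w.1‖^2 ≤ (q * ‖𝒯 w.1‖ + M * ‖(w.1 : E)‖)^2 := by
      have h := hCb w.1
      nlinarith [norm_nonneg (Cmap w.1)]
    have e2 : ‖Cmap w.2‖^2 ≤ (q * ‖𝒯 w.2‖ + M * ‖(w.2 : E)‖)^2 := by
      have h := hCb w.2
      nlinarith [norm_nonneg (Cmap w.2)]
    have hMt : M / t * t = M := div_mul_cancel₀ M ht.ne'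
    have hs := scalar_ineq (q := q) (μ := M/t) (t := t) (a1 := ‖𝒯 w.1‖) (a2 := ‖𝒯 w.2‖)
      (b1 := ‖(w.1 : E)‖) (b2 := ‖(w.2 : E)‖)
    rw [hMt] at hs
    have key : ‖Clin w‖^2 ≤ (c * ‖P w‖)^2 := by
      rw [mul_pow, hc2, hPdef, pmapPair_norm_sq t hsymT w, hn]
      linarith
    exact norm_le_of_sq_le_sq (by positivity) key
  set Φ := LinearEquiv.ofBijective P ⟨hinj, hsurjT⟩ with hΦdef
  set K : WithLp 2 (E × E) →ₗ[𝕜] WithLp 2 (E × E) := Clin.comp Φ.symm.toLinearMap with hKdef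
  have hK : ∀ h, ‖K h‖ ≤ c * ‖h‖ := by
    intro h
    have h1 : P (Φ.symm h) = h := Φ.apply_symm_apply h
    calc ‖K h‖ = ‖Clin (Φ.symm h)‖ := rfl
    _ ≤ c * ‖P (Φ.symm h)‖ := hCbound _
    _ = c * ‖h‖ := by rw [h1]
  set Kc := K.mkContinuous c hK with hKcdef
  have hKcnorm : ‖Kc‖ ≤ c := LinearMap.mkContinuous_norm_le K hc0 hK
  have hunit : ‖-Kc‖ < 1 := by rw [norm_neg]; exact lt_of_le_of_lt hKcnorm hc
  set u1 := Units.oneSub (-Kc) hunit with hu1def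
  intro f g
  set hfg : WithLp 2 (E × E) := (WithLp.equiv 2 (E × E)).symm (f, g) with hfgdef
  set y0 : WithLp 2 (E × E) := (↑u1⁻¹ : _ →L[𝕜] _) hfg with hy0def
  have hy0 : y0 + Kc y0 = hfg := by
    have h := DFunLike.congr_fun (Units.mul_inv u1) hfg
    rw [ContinuousLinearMap.mul_apply, ContinuousLinearMap.one_apply] at h
    have hval : (↑u1 : WithLp 2 (E × E) →L[𝕜] WithLp 2 (E × E)) = 1 - (-Kc) := rfl
    rw [hval, sub_neg_eq_add, ContinuousLinearMap.add_apply,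
      ContinuousLinearMap.one_apply] at h
    exact h
  set w := Φ.symm y0 with hwdef
  have hw : P w + Clin w = hfg := by
    have h1 : P w = y0 := Φ.apply_symm_apply y0
    have h2 : Clin w = Kc y0 := rfl
    rw [h1, h2, hy0]
  refine ⟨⟨(w.1 : E), hdom w.1.2⟩, ⟨(w.2 : E), hdom w.2.2⟩, ?_, ?_⟩
  · have h1 := congrArg WithLp.fst hw
    have e : (P w + Clin w).fst
        = (𝒯 w.1 - (t : 𝕜) • (w.2 : E)) + (𝒮 ⟨(w.1 : E), hdom w.1.2⟩ - 𝒯 w.1) := rfl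
    rw [e] at h1
    have e2 : hfg.fst = f := rfl
    rw [e2] at h1
    rw [← h1]; abel
  · have h1 := congrArg WithLp.snd hw
    have e : (P w + Clin w).snd
        = (𝒯 w.2 + (t : 𝕜) • (w.1 : E)) + (𝒮 ⟨(w.2 : E), hdom w.2.2⟩ - 𝒯 w.2) := rfl
    rw [e] at h1
    have e2 : hfg.snd = g := rfl
    rw [e2] at h1
    rw [← h1]; abel

lemma closable_of_symm {T : E →ₗ.[𝕜] E} (hd : Dense (T.domain : Set E))
    (hsym : ∀ x y : T.domain, ⟪T x, (y : E)⟫_𝕜 = ⟪(x : E), T y⟫_𝕜) : T.IsClosable := by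
  refine ⟨T.graph.topologicalClosure.toLinearPMap, (Submodule.toLinearPMap_graph_eq _ ?_).symm⟩
  intro z hz h1
  have hz' : z ∈ closure (T.graph : Set (E × E)) := by
    rwa [← Submodule.topologicalClosure_coe]
  obtain ⟨seq, hseqmem, hseqtend⟩ := mem_closure_iff_seq_limit.mp hz'
  choose d hd1 hd2 using fun n => (mem_graph_iff T).1 (hseqmem n)
  have htend1 : Tendsto (fun n => ((d n : E))) atTop (𝓝 z.1) := by
    have := (continuous_fst.tendsto z).comp hseqtend
    simpa [Function.comp_def, hd1] using this
  have htend2 : Tendsto (fun n => T (d n)) atTop (𝓝 z.2) := by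
    have := (continuous_snd.tendsto z).comp hseqtend
    simpa [Function.comp_def, hd2] using this
  apply hd.eq_zero_of_inner_left (𝕜 := 𝕜)
  intro v0 hv0
  let v : T.domain := ⟨v0, hv0⟩
  show ⟪z.2, (v : E)⟫_𝕜 = 0
  have hlim1 : Tendsto (fun n => ⟪T (d n), (v : E)⟫_𝕜) atTop (𝓝 ⟪z.2, (v : E)⟫_𝕜) :=
    htend2.inner tendsto_const_nhds
  have hlim2 : Tendsto (fun n => ⟪T (d n), (v : E)⟫_𝕜) atTop (𝓝 (0 : 𝕜)) := by
    have h0 : Tendsto (fun n => ⟪((d n) : E), T v⟫_𝕜) atTop (𝓝 ⟪z.1, T v⟫_𝕜) :=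
      htend1.inner tendsto_const_nhds
    rw [h1] at h0
    simp only [inner_zero_left] at h0
    have he : (fun n => ⟪((d n) : E), T v⟫_𝕜) = fun n => ⟪T (d n), (v : E)⟫_𝕜 :=
      funext fun n => (hsym (d n) v).symm
    rwa [he] at h0
  exact tendsto_nhds_unique hlim1 hlim2

lemma mem_closure_graph_iff {T : E →ₗ.[𝕜] E} (hT : T.IsClosable) {z : E × E} :
    z ∈ T.closure.graph ↔ ∃ d : ℕ → T.domain,
      Tendsto (fun n => (((d n) : E), T (d n))) atTop (𝓝 z) := by
  rw [← hT.graph_closure_eq_closure_graph]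
  rw [show (z ∈ T.graph.topologicalClosure) ↔ z ∈ (T.graph.topologicalClosure : Set (E × E))
    from Iff.rfl, Submodule.topologicalClosure_coe, mem_closure_iff_seq_limit]
  constructor
  · rintro ⟨seq, hmem, htend⟩
    choose d hd1 hd2 using fun n => (mem_graph_iff T).1 (hmem n)
    refine ⟨d, ?_⟩
    have he : (fun n => (((d n) : E), T (d n))) = seq :=
      funext fun n => Prod.ext (hd1 n) (hd2 n)
    rwa [he]
  · rintro ⟨d, htend⟩
    exact ⟨_, fun n => T.mem_graph (d n), htend⟩

lemma closure_approx {T : E →ₗ.[𝕜] E} (hT : T.IsClosable) (x : T.closure.domain) :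
    ∃ d : ℕ → T.domain, Tendsto (fun n => (((d n) : E), T (d n))) atTop
      (𝓝 ((x : E), T.closure x)) :=
  (mem_closure_graph_iff hT).1 (T.closure.mem_graph x)

lemma closure_symm {T : E →ₗ.[𝕜] E} (hT : T.IsClosable)
    (hsym : ∀ x y : T.domain, ⟪T x, (y : E)⟫_𝕜 = ⟪(x : E), T y⟫_𝕜) :
    ∀ x y : T.closure.domain, ⟪T.closure x, (y : E)⟫_𝕜 = ⟪(x : E), T.closure y⟫_𝕜 := by
  have step1 : ∀ x : T.closure.domain, ∀ v : T.domain,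
      ⟪T.closure x, (v : E)⟫_𝕜 = ⟪(x : E), T v⟫_𝕜 := by
    intro x v
    obtain ⟨d, htend⟩ := closure_approx hT x
    have htend1 : Tendsto (fun n => ((d n : E))) atTop (𝓝 (x : E)) :=
      (continuous_fst.tendsto _).comp htend
    have htend2 : Tendsto (fun n => T (d n)) atTop (𝓝 (T.closure x)) :=
      (continuous_snd.tendsto _).comp htend
    have hlim1 : Tendsto (fun n => ⟪T (d n), (v : E)⟫_𝕜) atTop
        (𝓝 ⟪T.closure x, (v : E)⟫_𝕜) := htend2.inner tendsto_const_nhds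
    have hlim2 : Tendsto (fun n => ⟪T (d n), (v : E)⟫_𝕜) atTop
        (𝓝 ⟪(x : E), T v⟫_𝕜) := by
      have h0 : Tendsto (fun n => ⟪((d n) : E), T v⟫_𝕜) atTop (𝓝 ⟪(x : E), T v⟫_𝕜) :=
        htend1.inner tendsto_const_nhds
      have he : (fun n => ⟪((d n) : E), T v⟫_𝕜) = fun n => ⟪T (d n), (v : E)⟫_𝕜 :=
        funext fun n => (hsym (d n) v).symm
      rwa [he] at h0
    exact tendsto_nhds_unique hlim1 hlim2
  intro x y
  obtain ⟨e, htend⟩ := closure_approx hT y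
  have htend1 : Tendsto (fun n => ((e n : E))) atTop (𝓝 (y : E)) :=
    (continuous_fst.tendsto _).comp htend
  have htend2 : Tendsto (fun n => T (e n)) atTop (𝓝 (T.closure y)) :=
    (continuous_snd.tendsto _).comp htend
  have hlim1 : Tendsto (fun n => ⟪T.closure x, ((e n) : E)⟫_𝕜) atTop
      (𝓝 ⟪T.closure x, (y : E)⟫_𝕜) := tendsto_const_nhds.inner htend1
  have hlim2 : Tendsto (fun n => ⟪T.closure x, ((e n) : E)⟫_𝕜) atTop
      (𝓝 ⟪(x : E), T.closure y⟫_𝕜) := by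
    have h0 : Tendsto (fun n => ⟪(x : E), T (e n)⟫_𝕜) atTop
        (𝓝 ⟪(x : E), T.closure y⟫_𝕜) := tendsto_const_nhds.inner htend2
    have he : (fun n => ⟪(x : E), T (e n)⟫_𝕜) = fun n => ⟪T.closure x, ((e n) : E)⟫_𝕜 :=
      funext fun n => (step1 x (e n)).symm
    rwa [he] at h0
  exact tendsto_nhds_unique hlim1 hlim2

lemma dom_transfer {T S : E →ₗ.[𝕜] E} (hdom : T.domain = S.domain)
    {q M : ℝ}
    (h₁ : ∀ u : T.domain, ∀ v : S.domain, (u : E) = (v : E) →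
      ‖S v - T u‖ ≤ q * ‖T u‖ + M * ‖(u : E)‖)
    (hTcl : T.IsClosable) (hScl : S.IsClosable) :
    ∀ x : T.closure.domain, ∃ hx : (x : E) ∈ S.closure.domain,
      ‖S.closure ⟨(x : E), hx⟩ - T.closure x‖
        ≤ q * ‖T.closure x‖ + M * ‖(x : E)‖ := by
  intro x
  obtain ⟨d, htend⟩ := closure_approx hTcl x
  have htend1 : Tendsto (fun n => ((d n : E))) atTop (𝓝 (x : E)) :=
    (continuous_fst.tendsto _).comp htend
  have htend2 : Tendsto (fun n => T (d n)) atTop (𝓝 (T.closure x)) :=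
    (continuous_snd.tendsto _).comp htend
  -- the same sequence inside S.domain
  let d' : ℕ → S.domain := fun n => ⟨(d n : E), hdom ▸ (d n).2⟩
  have hd' : ∀ n, ((d' n : E)) = ((d n : E)) := fun n => rfl
  have hbd : ∀ u : T.domain, ∀ v : S.domain, (u : E) = (v : E) →
      ‖S v‖ ≤ (1 + q) * ‖T u‖ + M * ‖(u : E)‖ := by
    intro u v huv
    calc ‖S v‖ = ‖(S v - T u) + T u‖ := by congr 1; abel
    _ ≤ ‖S v - T u‖ + ‖T u‖ := norm_add_le _ _
    _ ≤ (q * ‖T u‖ + M * ‖(u : E)‖) + ‖T u‖ := by linarith [h₁ u v huv]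
    _ = (1 + q) * ‖T u‖ + M * ‖(u : E)‖ := by ring
  have hcB : CauchySeq (fun n => S (d' n)) := by
    apply cauchySeq_of_le (C := 1 + q) (C' := M) htend2.cauchySeq htend1.cauchySeq
    intro n m
    have hsub : S (d' n) - S (d' m) = S (d' n - d' m) := (LinearPMap.map_sub S _ _).symm
    have hsubT : T (d n) - T (d m) = T (d n - d m) := (LinearPMap.map_sub T _ _).symm
    rw [dist_eq_norm, dist_eq_norm, dist_eq_norm, hsub, hsubT]
    have := hbd (d n - d m) (d' n - d' m) rfl
    calc ‖S (d' n - d' m)‖ ≤ (1 + q) * ‖T (d n - d m)‖ + M * ‖((d n - d m : T.domain) : E)‖ :=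
      this
    _ = (1 + q) * ‖T (d n - d m)‖ + M * ‖(d n : E) - (d m : E)‖ := rfl
  obtain ⟨z, hz⟩ := cauchySeq_tendsto_of_complete hcB
  have hmemS : ((x : E), z) ∈ S.closure.graph :=
    (mem_closure_graph_iff hScl).2 ⟨d', htend1.prodMk_nhds hz⟩
  obtain ⟨y, hy1, hy2⟩ := (mem_graph_iff _).1 hmemS
  have hy1' : (y : E) = (x : E) := hy1
  have hy2' : S.closure y = z := hy2
  have hxmem : (x : E) ∈ S.closure.domain := hy1' ▸ y.2
  refine ⟨hxmem, ?_⟩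
  have hyx : (⟨(x : E), hxmem⟩ : S.closure.domain) = y := Subtype.ext hy1'.symm
  rw [hyx, hy2']
  have hlim1 : Tendsto (fun n => ‖S (d' n) - T (d n)‖) atTop (𝓝 ‖z - T.closure x‖) :=
    (hz.sub htend2).norm
  have hlim2 : Tendsto (fun n => q * ‖T (d n)‖ + M * ‖(d n : E)‖) atTop
      (𝓝 (q * ‖T.closure x‖ + M * ‖(x : E)‖)) :=
    (htend2.norm.const_mul q).add (htend1.norm.const_mul M)
  exact le_of_tendsto_of_tendsto' hlim1 hlim2 (fun n => h₁ (d n) (d' n) rfl)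

theorem kr_main {D : Submodule 𝕜 E} (hD : Dense (D : Set E)) (A B : D →ₗ[𝕜] E)
    (hAsym : ∀ u v : D, ⟪A u, (v : E)⟫_𝕜 = ⟪(u : E), A v⟫_𝕜)
    (hBsym : ∀ u v : D, ⟪B u, (v : E)⟫_𝕜 = ⟪(u : E), B v⟫_𝕜)
    (q M : ℝ) (hq : q ∈ Set.Ioo (0:ℝ) 1) (hM : 0 ≤ M)
    (h₁ : ∀ u : D, ‖B u - A u‖ ≤ q * ‖A u‖ + M * ‖(u : E)‖)
    (hsa : IsSelfAdjoint (LinearPMap.closure ⟨D, A⟩)) :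
    IsSelfAdjoint (LinearPMap.closure ⟨D, B⟩) := by
  set T : E →ₗ.[𝕜] E := ⟨D, A⟩ with hTdef
  set S : E →ₗ.[𝕜] E := ⟨D, B⟩ with hSdef
  have hTcl : T.IsClosable := closable_of_symm hD hAsym
  have hScl : S.IsClosable := closable_of_symm hD hBsym
  have hsymS : ∀ x y : S.closure.domain,
      ⟪S.closure x, (y : E)⟫_𝕜 = ⟪(x : E), S.closure y⟫_𝕜 := closure_symm hScl hBsym
  have hsymT : ∀ x y : T.closure.domain,
      ⟪T.closure x, (y : E)⟫_𝕜 = ⟪(x : E), T.closure y⟫_𝕜 := closure_symm hTcl hAsym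
  -- choose t
  obtain ⟨hq0, hq1⟩ := hq
  have h1q : (0:ℝ) < 1 - q^2 := by nlinarith
  set s : ℝ := Real.sqrt (1 - q^2) with hsdef
  have hs2 : s^2 = 1 - q^2 := Real.sq_sqrt h1q.le
  have hs0 : 0 < s := Real.sqrt_pos.2 h1q
  set t : ℝ := (M + 1) / s with htdef
  have ht : 0 < t := by positivity
  have hc : Real.sqrt (q^2 + (M/t)^2) < 1 := by
    have hlt : q^2 + (M/t)^2 < 1 := by
      have hMt : M / t = M * s / (M + 1) := by
        rw [htdef]
        field_simp
      rw [hMt, div_pow, mul_pow]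
      have key : M^2 * s^2 / (M + 1)^2 < 1 - q^2 := by
        rw [div_lt_iff₀ (by positivity), hs2]
        nlinarith
      linarith
    calc Real.sqrt (q^2 + (M/t)^2) < Real.sqrt 1 := Real.sqrt_lt_sqrt (by positivity) hlt
    _ = 1 := Real.sqrt_one
  -- surjectivity for the closure of A
  have hTclosed : T.closure.IsClosed := hTcl.closure_isClosed
  have hsurjT := pmapPair_surjective hTclosed hsa ht.ne'
  -- transfer of domains
  have h₁' : ∀ u : T.domain, ∀ v : S.domain, (u : E) = (v : E) →
      ‖S v - T u‖ ≤ q * ‖T u‖ + M * ‖(u : E)‖ := by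
    intro u v huv
    have hv : v = ⟨(u : E), u.2⟩ := Subtype.ext huv.symm
    rw [hv]
    exact h₁ u
  have htrans := dom_transfer (T := T) (S := S) rfl (q := q) (M := M) h₁' hTcl hScl
  have hdom : T.closure.domain ≤ S.closure.domain := fun zx hzx => (htrans ⟨zx, hzx⟩).1
  have hC : ∀ x : T.closure.domain,
      ‖S.closure ⟨(x : E), hdom x.2⟩ - T.closure x‖
        ≤ q * ‖T.closure x‖ + M * ‖(x : E)‖ := fun x => (htrans x).2
  have hsurjS := perturbed_surj hsymT hdom ht hq0.le hM hc hC hsurjT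
  have hdenseS : Dense (S.closure.domain : Set E) :=
    hD.mono (fun z hz => S.le_closure.1 hz)
  exact isSelfAdjoint_of_surj hdenseS hsymS ht.ne' hsurjS

end KRaux

open KRaux in
/-- Kato–Rellich, symmetric form: if `A` and `B` are symmetric densely defined operators
with the same dense domain `D`, and `‖(B-A)u‖ ≤ q‖Au‖ + M‖u‖` and
`‖(B-A)u‖ ≤ q‖Bu‖ + M‖u‖` for all `u ∈ D` with `q ∈ (0,1)`, `M ≥ 0`, then `A` is
essentially self-adjoint iff `B` is. -/
theorem essentially_selfAdjoint_iff_of_relatively_bounded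
    {𝕜 E : Type*} [RCLike 𝕜] [NormedAddCommGroup E] [InnerProductSpace 𝕜 E]
    [CompleteSpace E] (D : Submodule 𝕜 E) (hD : Dense (D : Set E))
    (A B : D →ₗ[𝕜] E)
    (hAsym : ∀ u v : D, ⟪A u, (v : E)⟫_𝕜 = ⟪(u : E), A v⟫_𝕜)
    (hBsym : ∀ u v : D, ⟪B u, (v : E)⟫_𝕜 = ⟪(u : E), B v⟫_𝕜)
    (q M : ℝ) (hq : q ∈ Set.Ioo (0:ℝ) 1) (hM : 0 ≤ M)
    (h₁ : ∀ u : D, ‖B u - A u‖ ≤ q * ‖A u‖ + M * ‖(u : E)‖)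
    (h₂ : ∀ u : D, ‖B u - A u‖ ≤ q * ‖B u‖ + M * ‖(u : E)‖) :
    IsSelfAdjoint (LinearPMap.closure ⟨D, A⟩) ↔
      IsSelfAdjoint (LinearPMap.closure ⟨D, B⟩) := by
  constructor
  · exact kr_main hD A B hAsym hBsym q M hq hM h₁
  · apply kr_main hD B A hBsym hAsym q M hq hM
    intro u
    rw [norm_sub_rev]
    exact h₂ u
end

section
/- For every ν ∈ ℝ, the modified Bessel function of the second kind satisfies K_ν(r) ~ √(π/2) r^{-1/2} e^{-r} as r → +∞. -/
open Real Filter Set MeasureTheory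

/-- The modified Bessel function of the second kind, via its standard
integral representation `K_ν(r) = ∫_0^∞ e^{-r cosh t} cosh(ν t) dt`. -/
noncomputable def besselK (ν r : ℝ) : ℝ :=
  ∫ t in Set.Ioi (0 : ℝ), Real.exp (-r * Real.cosh t) * Real.cosh (ν * t)

lemma tendsto_sqrt_atTop' : Tendsto Real.sqrt atTop atTop := by
  have := tendsto_rpow_atTop (by norm_num : (0:ℝ) < 1/2)
  exact this.congr fun x => (Real.sqrt_eq_rpow x).symm

lemma tendsto_sinh_div : Tendsto (fun y : ℝ => Real.sinh y / y) (nhdsWithin 0 {0}ᶜ) (nhds 1) := by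
  have h := Real.hasDerivAt_sinh 0
  rw [hasDerivAt_iff_tendsto_slope] at h
  simpa [slope_fun_def, Real.sinh_zero, Real.cosh_zero, div_eq_inv_mul] using h

lemma cosh_sub_one_eq (x : ℝ) : Real.cosh x - 1 = 2 * Real.sinh (x / 2) ^ 2 := by
  have h : Real.cosh x = Real.cosh (2 * (x / 2)) := by ring_nf
  rw [h, Real.cosh_two_mul, Real.cosh_sq]
  ring

lemma tendsto_cosh_sub_one_div_sq :
    Tendsto (fun x : ℝ => (Real.cosh x - 1) / x ^ 2) (nhdsWithin 0 {0}ᶜ) (nhds (1/2)) := by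
  have h1 : Tendsto (fun x : ℝ => x / 2) (nhdsWithin 0 {0}ᶜ) (nhdsWithin 0 {0}ᶜ) := by
    apply tendsto_nhdsWithin_of_tendsto_nhds_of_eventually_within
    · exact Tendsto.mono_left (by simpa using (continuous_id.div_const (2:ℝ)).tendsto 0) nhdsWithin_le_nhds
    · filter_upwards [self_mem_nhdsWithin] with x hx
      exact div_ne_zero hx (two_ne_zero)
  have h2 : Tendsto (fun x : ℝ => (Real.sinh (x / 2) / (x / 2)) ^ 2 / 2)
      (nhdsWithin 0 {0}ᶜ) (nhds (1/2)) := by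
    have := ((tendsto_sinh_div.comp h1).pow 2).div_const 2
    simpa using this
  refine h2.congr' ?_
  filter_upwards [self_mem_nhdsWithin] with x hx
  have hx2 : x ≠ 0 := hx
  rw [cosh_sub_one_eq]
  field_simp

lemma aux_limit (s : ℝ) (hs : 0 < s) :
    Tendsto (fun r : ℝ => r * (Real.cosh (s / Real.sqrt r) - 1)) atTop (nhds (s ^ 2 / 2)) := by
  have h0 : Tendsto (fun r : ℝ => s / Real.sqrt r) atTop (nhdsWithin 0 {0}ᶜ) := by
    apply tendsto_nhdsWithin_of_tendsto_nhds_of_eventually_within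
    · exact Tendsto.div_atTop tendsto_const_nhds tendsto_sqrt_atTop'
    · filter_upwards [eventually_gt_atTop (0:ℝ)] with r hr
      exact (div_pos hs (Real.sqrt_pos.2 hr)).ne'
  have h1 := (tendsto_cosh_sub_one_div_sq.comp h0).const_mul (s ^ 2)
  have h2 : s ^ 2 * (1/2) = s ^ 2 / 2 := by ring
  rw [h2] at h1
  refine h1.congr' ?_
  filter_upwards [eventually_gt_atTop (0:ℝ)] with r hr
  have hsr : Real.sqrt r ≠ 0 := (Real.sqrt_pos.2 hr).ne'
  have hrr : Real.sqrt r ^ 2 = r := Real.sq_sqrt hr.le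
  simp only [Function.comp]
  rw [div_pow]
  field_simp
  linear_combination (Real.cosh (s / Real.sqrt r) - 1) * hrr

/-- For every `ν ∈ ℝ`, `K_ν(r) ~ √(π/2) r^{-1/2} e^{-r}` as `r → +∞`. -/
theorem besselK_asymptotics_infty (ν : ℝ) :
    Tendsto (fun r : ℝ => besselK ν r / (Real.sqrt (π / 2) * r ^ (-(1:ℝ)/2) * Real.exp (-r)))
      atTop (nhds 1) := by
  set q : ℝ → ℝ → ℝ := fun r s =>
    Real.exp (-(r * (Real.cosh (s / Real.sqrt r) - 1))) * Real.cosh (ν * (s / Real.sqrt r)) with hq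
  -- value of the Gaussian integral
  have hgauss : (∫ s in Ioi (0:ℝ), Real.exp (-(1/2) * s ^ 2)) = Real.sqrt (π / 2) := by
    rw [integral_gaussian_Ioi]
    rw [show π / (1/2) = 2 ^ 2 * (π / 2) by ring, Real.sqrt_mul (by positivity)]
    rw [Real.sqrt_sq (by norm_num : (0:ℝ) ≤ 2)]
    ring
  have hsq2pos : (0:ℝ) < Real.sqrt (π / 2) := Real.sqrt_pos.2 (by positivity)
  -- dominated convergence
  have hF : Tendsto (fun r => ∫ s in Ioi (0:ℝ), q r s) atTop (nhds (Real.sqrt (π / 2))) := by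
    rw [← hgauss]
    apply tendsto_integral_filter_of_dominated_convergence
      (bound := fun s => Real.exp (-(s ^ 2 / 2)) * Real.cosh (|ν| * s))
    · filter_upwards with r
      apply Continuous.aestronglyMeasurable
      fun_prop
    · filter_upwards [eventually_ge_atTop (1:ℝ)] with r hr
      rw [ae_restrict_iff' measurableSet_Ioi]
      filter_upwards with s hs
      have hs' : (0:ℝ) < s := hs
      have hr0 : (0:ℝ) < r := lt_of_lt_of_le one_pos hr
      have hsr1 : (1:ℝ) ≤ Real.sqrt r := by
        rw [show (1:ℝ) = Real.sqrt 1 by simp]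
        exact Real.sqrt_le_sqrt hr
      have hsrpos : (0:ℝ) < Real.sqrt r := lt_of_lt_of_le one_pos hsr1
      have hq1 : Real.exp (-(r * (Real.cosh (s / Real.sqrt r) - 1))) ≤ Real.exp (-(s ^ 2 / 2)) := by
        apply Real.exp_le_exp.2
        rw [neg_le_neg_iff]
        have hy : (0:ℝ) < s / Real.sqrt r / 2 := by positivity
        have hsinh : s / Real.sqrt r / 2 ≤ Real.sinh (s / Real.sqrt r / 2) :=
          (Real.self_lt_sinh_iff.2 hy).le
        have hsq : (s / Real.sqrt r / 2) ^ 2 ≤ Real.sinh (s / Real.sqrt r / 2) ^ 2 :=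
          pow_le_pow_left₀ hy.le hsinh 2
        rw [cosh_sub_one_eq]
        have hrr : Real.sqrt r ^ 2 = r := Real.sq_sqrt hr0.le
        have key : r * (2 * (s / Real.sqrt r / 2) ^ 2) = s ^ 2 / 2 := by
          have h4 : (s / Real.sqrt r / 2) ^ 2 = s ^ 2 / (r * 4) := by
            rw [div_pow, div_pow, hrr]; ring
          rw [h4]; field_simp; ring
        calc s ^ 2 / 2 = r * (2 * (s / Real.sqrt r / 2) ^ 2) := key.symm
          _ ≤ r * (2 * Real.sinh (s / Real.sqrt r / 2) ^ 2) := by nlinarith [hr0.le, hsq]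
      have hq2 : Real.cosh (ν * (s / Real.sqrt r)) ≤ Real.cosh (|ν| * s) := by
        rw [Real.cosh_le_cosh]
        calc |ν * (s / Real.sqrt r)| = |ν| * (s / Real.sqrt r) := by
              rw [abs_mul, abs_of_pos (show (0:ℝ) < s / Real.sqrt r by positivity)]
          _ ≤ |ν| * s :=
              mul_le_mul_of_nonneg_left (div_le_self hs'.le hsr1) (abs_nonneg ν)
          _ ≤ |(|ν| * s)| := le_abs_self _
      have hpos1 : (0:ℝ) < Real.exp (-(r * (Real.cosh (s / Real.sqrt r) - 1))) := Real.exp_pos _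
      have hpos2 : (0:ℝ) < Real.cosh (ν * (s / Real.sqrt r)) := Real.cosh_pos _
      rw [hq, Real.norm_eq_abs, abs_of_pos (by positivity)]
      exact mul_le_mul hq1 hq2 hpos2.le (Real.exp_pos _).le
    · -- integrability of the bound
      apply Integrable.integrableOn
      have hint : ∀ a : ℝ, Integrable (fun s : ℝ => Real.exp (-(1/2) * (s - a) ^ 2)) := by
        intro a
        exact (integrable_exp_neg_mul_sq (by norm_num : (0:ℝ) < 1/2)).comp_sub_right a
      have h1 := ((hint |ν|).const_mul (Real.exp (|ν| ^ 2 / 2))).add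
        ((hint (-|ν|)).const_mul (Real.exp (|ν| ^ 2 / 2)))
      have h2 := h1.div_const 2
      refine h2.congr (Filter.Eventually.of_forall fun s => ?_)
      simp only [Pi.add_apply]
      rw [Real.cosh_eq, ← mul_div_assoc, mul_add, ← Real.exp_add, ← Real.exp_add,
        ← Real.exp_add, ← Real.exp_add]
      rw [show |ν| ^ 2 / 2 + -(1/2) * (s - |ν|) ^ 2 = -(s ^ 2 / 2) + |ν| * s by ring,
        show |ν| ^ 2 / 2 + -(1/2) * (s - -|ν|) ^ 2 = -(s ^ 2 / 2) + -(|ν| * s) by ring]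
    · -- pointwise limit
      rw [ae_restrict_iff' measurableSet_Ioi]
      filter_upwards with s hs
      have hs' : (0:ℝ) < s := hs
      have l1 : Tendsto (fun r : ℝ => Real.exp (-(r * (Real.cosh (s / Real.sqrt r) - 1))))
          atTop (nhds (Real.exp (-(s ^ 2 / 2)))) :=
        (Real.continuous_exp.tendsto _).comp (aux_limit s hs').neg
      have l0 : Tendsto (fun r : ℝ => s / Real.sqrt r) atTop (nhds 0) :=
        Tendsto.div_atTop tendsto_const_nhds tendsto_sqrt_atTop'
      have l2 : Tendsto (fun r : ℝ => Real.cosh (ν * (s / Real.sqrt r))) atTop (nhds 1) := by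
        have := (Real.continuous_cosh.tendsto 0).comp (by simpa using l0.const_mul ν :
          Tendsto (fun r : ℝ => ν * (s / Real.sqrt r)) atTop (nhds 0))
        simpa [Function.comp_def] using this
      have hm := l1.mul l2
      rw [mul_one] at hm
      rw [show -(1/2) * s ^ 2 = -(s ^ 2 / 2) by ring]
      exact hm
  -- identify besselK with the rescaled integral
  have key : ∀ᶠ r in atTop,
      besselK ν r / (Real.sqrt (π / 2) * r ^ (-(1:ℝ)/2) * Real.exp (-r))
        = (∫ s in Ioi (0:ℝ), q r s) / Real.sqrt (π / 2) := by
    filter_upwards [eventually_gt_atTop (0:ℝ)] with r hr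
    have hsr : (0:ℝ) < Real.sqrt r := Real.sqrt_pos.2 hr
    have hcv := integral_comp_mul_left_Ioi
      (fun t => Real.exp (-r * Real.cosh t) * Real.cosh (ν * t)) 0 (inv_pos.2 hsr)
    rw [mul_zero] at hcv
    simp only [smul_eq_mul, inv_inv] at hcv
    have hb : besselK ν r = (Real.sqrt r)⁻¹ *
        ∫ s in Ioi (0:ℝ), Real.exp (-r * Real.cosh ((Real.sqrt r)⁻¹ * s))
          * Real.cosh (ν * ((Real.sqrt r)⁻¹ * s)) := by
      rw [besselK, hcv, ← mul_assoc, inv_mul_cancel₀ hsr.ne', one_mul]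
    have hfun : ∀ s : ℝ, Real.exp (-r * Real.cosh ((Real.sqrt r)⁻¹ * s))
        * Real.cosh (ν * ((Real.sqrt r)⁻¹ * s)) = Real.exp (-r) * q r s := by
      intro s
      rw [hq]
      have : (Real.sqrt r)⁻¹ * s = s / Real.sqrt r := by ring
      rw [this]
      rw [show -r * Real.cosh (s / Real.sqrt r)
        = -r + -(r * (Real.cosh (s / Real.sqrt r) - 1)) by ring, Real.exp_add]
      ring
    have hb2 : besselK ν r = Real.exp (-r) * (Real.sqrt r)⁻¹ * ∫ s in Ioi (0:ℝ), q r s := by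
      rw [hb]
      simp_rw [hfun]
      rw [integral_const_mul]
      ring
    have hrpow : r ^ (-(1:ℝ)/2) = (Real.sqrt r)⁻¹ := by
      rw [show (-(1:ℝ)/2) = -(1/2) by ring, Real.rpow_neg hr.le, Real.sqrt_eq_rpow]
    rw [hb2, hrpow]
    have hexp : Real.exp (-r) ≠ 0 := (Real.exp_pos _).ne'
    field_simp
  have hlim : Tendsto (fun r => (∫ s in Ioi (0:ℝ), q r s) / Real.sqrt (π / 2)) atTop (nhds 1) := by
    have := hF.div_const (Real.sqrt (π / 2))
    rwa [div_self hsq2pos.ne'] at this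
  exact Tendsto.congr' (Filter.EventuallyEq.symm key) hlim
end
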